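/- Terminal set invariance (Proposition 3, invariance part): With P, H_i, K, ρ_θ, L_B, w_η, d̄, c_j, c_max as defined (ρ_θ = max_i max_{x∈P} H_i A_cl(θ)x; L_B = max_{i,l} max_{x∈P} H_i D(x,Kx)ẽ_l; w_η(z,v) = η max_{i,l} H_i D(z,v)ẽ_l; d̄ = max_i max_{d∈D} H_i d; c_j = max_{x∈P}(F_j+G_jK)x; c_max = max_j c_j), suppose ρ_{θ̄₀} + η₀ L_B + c_max d̄ ≤ 1. Let Θ = θ̄ ⊕ η B_p ⊆ θ̄₀ ⊕ η₀ B_p. Then for all (x,s) ∈ X_f = {(x,s) : c_max(s + H_i x) ≤ 1 ∀i} with s ≥ 0, all s̃ ≥ 0, all s⁺ ∈ [0, (ρ_{θ̄} + η L_B)s + w_η(x,Kx) + d̄ − s̃], and all x⁺ with max_i H_i(x⁺ − A_cl(θ̄)x) ≤ s̃, it holds that (x⁺, s⁺) ∈ X_f. -/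

import Mathlib

open Matrix

noncomputable section

/-- The `2^p` vertices of the unit hypercube `B_p = {θ | ‖θ‖_∞ ≤ 1/2}`. -/
def vertexSet (p : ℕ) : Set (Fin p → ℝ) := {e | ∀ i, e i = 1 / 2 ∨ e i = -(1 / 2)}

/-- Affine parametrization `A(θ) = A₀ + Σ_i θ_i A_i`. -/
def Amat {n p : ℕ} (A0 : Matrix (Fin n) (Fin n) ℝ) (A : Fin p → Matrix (Fin n) (Fin n) ℝ)
    (θ : Fin p → ℝ) : Matrix (Fin n) (Fin n) ℝ := A0 + ∑ i, θ i • A i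

/-- Affine parametrization `B(θ) = B₀ + Σ_i θ_i B_i`. -/
def Bmat {n m p : ℕ} (B0 : Matrix (Fin n) (Fin m) ℝ) (B : Fin p → Matrix (Fin n) (Fin m) ℝ)
    (θ : Fin p → ℝ) : Matrix (Fin n) (Fin m) ℝ := B0 + ∑ i, θ i • B i

/-- `D(x,u) = [A₁x + B₁u, …, A_p x + B_p u]`. -/
def Dmat {n m p : ℕ} (A : Fin p → Matrix (Fin n) (Fin n) ℝ)
    (B : Fin p → Matrix (Fin n) (Fin m) ℝ) (x : Fin n → ℝ) (u : Fin m → ℝ) :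
    Matrix (Fin n) (Fin p) ℝ := Matrix.of fun i j => (A j *ᵥ x + B j *ᵥ u) i

/-- Contraction rate `ρ_M = max_i max_{x ∈ P} H_i M x`. -/
def rho {n r : ℕ} (H : Fin r → (Fin n → ℝ)) (P : Set (Fin n → ℝ))
    (M : Matrix (Fin n) (Fin n) ℝ) : ℝ :=
  sSup {y | ∃ i, ∃ x ∈ P, y = H i ⬝ᵥ (M *ᵥ x)}

/-- `L_B = max_{i,l} max_{x ∈ P} H_i D(x, Kx) ẽ_l`. -/
def LB {n m p r : ℕ} (H : Fin r → (Fin n → ℝ)) (P : Set (Fin n → ℝ))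
    (A : Fin p → Matrix (Fin n) (Fin n) ℝ) (B : Fin p → Matrix (Fin n) (Fin m) ℝ)
    (K : Matrix (Fin m) (Fin n) ℝ) : ℝ :=
  sSup {y | ∃ i, ∃ e ∈ vertexSet p, ∃ x ∈ P, y = H i ⬝ᵥ (Dmat A B x (K *ᵥ x) *ᵥ e)}

/-- `w_η(z,v) = η · max_{i,l} H_i D(z,v) ẽ_l`. -/
def wfun {n m p r : ℕ} (H : Fin r → (Fin n → ℝ))
    (A : Fin p → Matrix (Fin n) (Fin n) ℝ) (B : Fin p → Matrix (Fin n) (Fin m) ℝ)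
    (η : ℝ) (z : Fin n → ℝ) (v : Fin m → ℝ) : ℝ :=
  η * sSup {y | ∃ i, ∃ e ∈ vertexSet p, y = H i ⬝ᵥ (Dmat A B z v *ᵥ e)}

/-- `d̄ = max_i max_{d ∈ D} H_i d`. -/
def dbarDef {n r : ℕ} (H : Fin r → (Fin n → ℝ)) (Dset : Set (Fin n → ℝ)) : ℝ :=
  sSup {y | ∃ i, ∃ d ∈ Dset, y = H i ⬝ᵥ d}

lemma dot_sum_smul {n p : ℕ} (v : Fin n → ℝ) (c : Fin p → ℝ) (w : Fin p → Fin n → ℝ) :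
    v ⬝ᵥ (∑ j, c j • w j) = ∑ j, c j * (v ⬝ᵥ w j) := by
  simp only [dotProduct, Finset.sum_apply, Pi.smul_apply, smul_eq_mul, Finset.mul_sum]
  rw [Finset.sum_comm]
  exact Finset.sum_congr rfl fun j _ => Finset.sum_congr rfl fun i _ => by ring

lemma sum_smul_mulVec {n p : ℕ} (c : Fin p → ℝ) (N : Fin p → Matrix (Fin n) (Fin n) ℝ)
    (z : Fin n → ℝ) : (∑ j, c j • N j) *ᵥ z = ∑ j, c j • (N j *ᵥ z) := by
  ext k
  simp only [mulVec, dotProduct, Finset.sum_apply, Matrix.sum_apply, Pi.smul_apply,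
    Matrix.smul_apply, smul_eq_mul, Finset.sum_mul, Finset.mul_sum]
  rw [Finset.sum_comm]
  exact Finset.sum_congr rfl fun j _ => Finset.sum_congr rfl fun i _ => by ring

lemma scale_bound {n r : ℕ} (H : Fin r → (Fin n → ℝ)) (P : Set (Fin n → ℝ))
    (hP : P = {x | ∀ i, H i ⬝ᵥ x ≤ 1}) (f : (Fin n → ℝ) → ℝ)
    (hf : ∀ (t : ℝ) x, f (t • x) = t * f x) (C : ℝ) (hC : ∀ z ∈ P, f z ≤ C) (hC0 : 0 ≤ C)
    (x : Fin n → ℝ) (a : ℝ) (ha : 0 ≤ a) (hx : ∀ j, H j ⬝ᵥ x ≤ a) : f x ≤ a * C := by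
  rcases eq_or_lt_of_le ha with h0 | h0
  · have key : ∀ t : ℝ, 0 < t → t * f x ≤ C := by
      intro t ht
      have hmem : (t • x) ∈ P := by
        rw [hP]
        intro j
        rw [dotProduct_smul, smul_eq_mul]
        have h1 : H j ⬝ᵥ x ≤ 0 := by rw [h0]; exact hx j
        nlinarith
      calc t * f x = f (t • x) := (hf t x).symm
        _ ≤ C := hC _ hmem
    have hfx : f x ≤ 0 := by
      by_contra hpos
      push_neg at hpos
      have := key ((C + 1) / f x) (by positivity)
      rw [div_mul_cancel₀ _ (ne_of_gt hpos)] at this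
      linarith
    rw [← h0, zero_mul]; exact hfx
  · have hz : a⁻¹ • x ∈ P := by
      rw [hP]
      intro j
      rw [dotProduct_smul, smul_eq_mul]
      calc a⁻¹ * (H j ⬝ᵥ x) ≤ a⁻¹ * a :=
            mul_le_mul_of_nonneg_left (hx j) (by positivity)
        _ = 1 := inv_mul_cancel₀ (ne_of_gt h0)
    have hfx : f x = a * f (a⁻¹ • x) := by
      rw [← hf]; congr 1; rw [smul_smul, mul_inv_cancel₀ (ne_of_gt h0), one_smul]
    rw [hfx]
    exact mul_le_mul_of_nonneg_left (hC _ hz) h0.le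

lemma exists_nonneg_dot {n r : ℕ} (H : Fin r → (Fin n → ℝ)) (P : Set (Fin n → ℝ))
    (hP : P = {x | ∀ i, H i ⬝ᵥ x ≤ 1}) (hPc : IsCompact P) (hr : Nonempty (Fin r))
    (x : Fin n → ℝ) : ∃ j, 0 ≤ H j ⬝ᵥ x := by
  by_contra h
  push_neg at h
  obtain ⟨j0⟩ := hr
  have hx0 : x ≠ 0 := by
    rintro rfl
    simpa using h j0
  have hray : ∀ t : ℝ, 0 ≤ t → t • x ∈ P := by
    intro t ht
    rw [hP]
    intro j
    rw [dotProduct_smul, smul_eq_mul]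
    nlinarith [h j]
  obtain ⟨R, hR⟩ := isBounded_iff_forall_norm_le.mp hPc.isBounded
  have hnx : 0 < ‖x‖ := norm_pos_iff.mpr hx0
  set t := (R + 1) / ‖x‖ with ht
  have ht0 : 0 ≤ t := by
    have : 0 ≤ R := le_trans (norm_nonneg _) (hR _ (hray 0 le_rfl))
    positivity
  have h2 := hR _ (hray t ht0)
  rw [norm_smul, Real.norm_eq_abs, abs_of_nonneg ht0, ht, div_mul_cancel₀ _ (ne_of_gt hnx)] at h2
  linarith

lemma bdd_rho {n r : ℕ} (H : Fin r → (Fin n → ℝ)) (P : Set (Fin n → ℝ)) (hPc : IsCompact P)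
    (M : Matrix (Fin n) (Fin n) ℝ) :
    BddAbove {y | ∃ i, ∃ x ∈ P, y = H i ⬝ᵥ (M *ᵥ x)} := by
  have hcont : Continuous fun q : Fin r × (Fin n → ℝ) => H q.1 ⬝ᵥ (M *ᵥ q.2) := by
    simp only [dotProduct, mulVec]
    refine continuous_finset_sum _ fun k _ => Continuous.mul ?_ ?_
    · exact Continuous.comp (continuous_of_discreteTopology (f := fun i : Fin r => H i k)) continuous_fst
    · exact continuous_finset_sum _ fun j _ =>
        continuous_const.mul ((continuous_apply j).comp continuous_snd)
  have heq : {y | ∃ i, ∃ x ∈ P, y = H i ⬝ᵥ (M *ᵥ x)} =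
      (fun q : Fin r × (Fin n → ℝ) => H q.1 ⬝ᵥ (M *ᵥ q.2)) '' (Set.univ ×ˢ P) := by
    ext y
    constructor
    · rintro ⟨i, x, hx, rfl⟩; exact ⟨(i, x), ⟨trivial, hx⟩, rfl⟩
    · rintro ⟨⟨i, x⟩, ⟨-, hx⟩, rfl⟩; exact ⟨i, x, hx, rfl⟩
  rw [heq]
  exact ((isCompact_univ.prod hPc).image hcont).bddAbove

lemma vertex_compact (p : ℕ) : IsCompact (vertexSet p) := by
  have heq : vertexSet p = Set.univ.pi (fun _ : Fin p => ({1 / 2, -(1 / 2)} : Set ℝ)) := by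
    ext e
    simp [vertexSet, Set.mem_pi]
  rw [heq]
  exact isCompact_univ_pi fun _ => (Set.toFinite _).isCompact

lemma bdd_LB {n m p r : ℕ} (H : Fin r → (Fin n → ℝ)) (P : Set (Fin n → ℝ)) (hPc : IsCompact P)
    (A : Fin p → Matrix (Fin n) (Fin n) ℝ) (B : Fin p → Matrix (Fin n) (Fin m) ℝ)
    (K : Matrix (Fin m) (Fin n) ℝ) :
    BddAbove {y | ∃ i, ∃ e ∈ vertexSet p, ∃ x ∈ P, y = H i ⬝ᵥ (Dmat A B x (K *ᵥ x) *ᵥ e)} := by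
  have hcont : Continuous fun q : Fin r × ((Fin p → ℝ) × (Fin n → ℝ)) =>
      H q.1 ⬝ᵥ (Dmat A B q.2.2 (K *ᵥ q.2.2) *ᵥ q.2.1) := by
    simp only [dotProduct, mulVec, Dmat, Matrix.of_apply, Pi.add_apply]
    refine continuous_finset_sum _ fun k _ => Continuous.mul ?_ ?_
    · exact Continuous.comp (continuous_of_discreteTopology (f := fun i : Fin r => H i k)) continuous_fst
    · refine continuous_finset_sum _ fun j _ => Continuous.mul (Continuous.add ?_ ?_) ?_
      · exact continuous_finset_sum _ fun l _ =>
          continuous_const.mul ((continuous_apply l).comp (continuous_snd.comp continuous_snd))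
      · refine continuous_finset_sum _ fun l _ => Continuous.mul continuous_const ?_
        exact continuous_finset_sum _ fun t _ =>
          continuous_const.mul ((continuous_apply t).comp (continuous_snd.comp continuous_snd))
      · exact (continuous_apply j).comp (continuous_fst.comp continuous_snd)
  have heq : {y | ∃ i, ∃ e ∈ vertexSet p, ∃ x ∈ P, y = H i ⬝ᵥ (Dmat A B x (K *ᵥ x) *ᵥ e)} =
      (fun q : Fin r × ((Fin p → ℝ) × (Fin n → ℝ)) =>
        H q.1 ⬝ᵥ (Dmat A B q.2.2 (K *ᵥ q.2.2) *ᵥ q.2.1)) ''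
        (Set.univ ×ˢ (vertexSet p ×ˢ P)) := by
    ext y
    constructor
    · rintro ⟨i, e, he, x, hx, rfl⟩; exact ⟨(i, e, x), ⟨trivial, he, hx⟩, rfl⟩
    · rintro ⟨⟨i, e, x⟩, ⟨-, he, hx⟩, rfl⟩; exact ⟨i, e, he, x, hx, rfl⟩
  rw [heq]
  exact ((isCompact_univ.prod ((vertex_compact p).prod hPc)).image hcont).bddAbove

/-- Proposition 3, invariance part: if
`ρ_{θ̄₀} + η₀L_B + c_max d̄ ≤ 1` and `Θ = θ̄ ⊕ ηB_p ⊆ θ̄₀ ⊕ η₀B_p`, then the terminal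
set `X_f = {(x,s) | c_max(s + H_i x) ≤ 1 ∀i}` is robustly positively invariant for the
tube dynamics. -/
theorem terminal_set_invariance {n m p r q : ℕ}
    (A0 : Matrix (Fin n) (Fin n) ℝ) (A : Fin p → Matrix (Fin n) (Fin n) ℝ)
    (B0 : Matrix (Fin n) (Fin m) ℝ) (B : Fin p → Matrix (Fin n) (Fin m) ℝ)
    (K : Matrix (Fin m) (Fin n) ℝ) (H : Fin r → (Fin n → ℝ))
    (P : Set (Fin n → ℝ)) (hP : P = {x | ∀ i, H i ⬝ᵥ x ≤ 1})
    (hPc : IsCompact P) (h0 : (0 : Fin n → ℝ) ∈ interior P)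
    (Acl : (Fin p → ℝ) → Matrix (Fin n) (Fin n) ℝ)
    (hAcl : ∀ θ, Acl θ = Amat A0 A θ + Bmat B0 B θ * K)
    (Dset : Set (Fin n → ℝ)) (hDc : IsCompact Dset) (hDne : Dset.Nonempty)
    (F : Fin q → (Fin n → ℝ)) (G : Fin q → (Fin m → ℝ))
    (c : Fin q → ℝ)
    (hc : ∀ j, IsGreatest ((fun x => F j ⬝ᵥ x + G j ⬝ᵥ (K *ᵥ x)) '' P) (c j))
    (cmax : ℝ) (hcmax : IsGreatest (Set.range c) cmax) (hcmax_pos : 0 < cmax)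
    (θbar0 θbar : Fin p → ℝ) (η0 η : ℝ) (hη : 0 ≤ η) (hηη0 : η ≤ η0)
    -- `Θ = θ̄ ⊕ ηB_p ⊆ Θ₀ = θ̄₀ ⊕ η₀B_p`
    (hΘsub : {θ : Fin p → ℝ | ∀ i, |θ i - θbar i| ≤ η / 2} ⊆
      {θ : Fin p → ℝ | ∀ i, |θ i - θbar0 i| ≤ η0 / 2})
    -- terminal condition (eq. 8): `ρ_{θ̄₀} + η₀ L_B + c_max d̄ ≤ 1`
    (hterm : rho H P (Acl θbar0) + η0 * LB H P A B K + cmax * dbarDef H Dset ≤ 1) :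
    ∀ (x : Fin n → ℝ) (s : ℝ),
      (∀ i, cmax * (s + H i ⬝ᵥ x) ≤ 1) → 0 ≤ s →
      ∀ stilde : ℝ, 0 ≤ stilde →
      ∀ splus : ℝ, 0 ≤ splus →
        splus ≤ (rho H P (Acl θbar) + η * LB H P A B K) * s +
          wfun H A B η x (K *ᵥ x) + dbarDef H Dset - stilde →
      ∀ xplus : Fin n → ℝ,
        (∀ i, H i ⬝ᵥ (xplus - Acl θbar *ᵥ x) ≤ stilde) →
        ∀ i, cmax * (splus + H i ⬝ᵥ xplus) ≤ 1 := by
  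
  intro x s hxs hs stilde hst splus hsp hsplus xplus hxplus i
  have h0P : (0 : Fin n → ℝ) ∈ P := interior_subset h0
  have hbdd0 : BddAbove {y | ∃ i, ∃ x ∈ P, y = H i ⬝ᵥ (Acl θbar0 *ᵥ x)} := bdd_rho H P hPc _
  have hbddL : BddAbove
      {y | ∃ i, ∃ e ∈ vertexSet p, ∃ x ∈ P, y = H i ⬝ᵥ (Dmat A B x (K *ᵥ x) *ᵥ e)} :=
    bdd_LB H P hPc A B K
  have hρ0nn : 0 ≤ rho H P (Acl θbar0) :=
    le_csSup hbdd0 ⟨i, 0, h0P, by simp⟩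
  have heV : (fun _ : Fin p => (1 : ℝ) / 2) ∈ vertexSet p := fun j => Or.inl rfl
  have hLnn : 0 ≤ LB H P A B K :=
    le_csSup hbddL ⟨i, _, heV, 0, h0P, by simp [Dmat, mulVec, dotProduct]⟩
  have hη0η : 0 ≤ η0 - η := by linarith
  -- bound on |θbar - θbar0|
  have hδ : ∀ j, |θbar j - θbar0 j| ≤ (η0 - η) / 2 := by
    intro j
    have key : ∀ t : ℝ, |t| ≤ η / 2 → |θbar j + t - θbar0 j| ≤ η0 / 2 := by
      intro t ht
      have hmem : (fun k => if k = j then θbar k + t else θbar k) ∈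
          {θ : Fin p → ℝ | ∀ i, |θ i - θbar i| ≤ η / 2} := by
        intro k
        by_cases hk : k = j
        · simpa [hk] using ht
        · simp [hk]; linarith
      have h2 := hΘsub hmem j
      simpa using h2
    have h1 := key (η / 2) (by rw [abs_of_nonneg (by linarith)])
    have h2 := key (-(η / 2)) (by rw [abs_neg, abs_of_nonneg (by linarith)])
    rw [abs_le]
    constructor
    · have := neg_abs_le (θbar j + -(η / 2) - θbar0 j)
      linarith [h2, neg_abs_le (θbar j + -(η / 2) - θbar0 j)]
    · linarith [le_abs_self (θbar j + η / 2 - θbar0 j)]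
  -- matrix decomposition
  have hexp : ∀ θ' : Fin p → ℝ, Acl θ' = A0 + B0 * K + ∑ j, θ' j • (A j + B j * K) := by
    intro θ'
    rw [hAcl]
    simp only [Amat, Bmat, Matrix.add_mul, Matrix.sum_mul, Matrix.smul_mul, smul_add,
      Finset.sum_add_distrib]
    abel
  have hM : Acl θbar = Acl θbar0 + ∑ j, (θbar j - θbar0 j) • (A j + B j * K) := by
    rw [hexp, hexp]
    simp only [sub_smul, Finset.sum_sub_distrib]
    abel
  -- element bound for Acl θbar on P
  have hElem : ∀ z ∈ P, ∀ i', H i' ⬝ᵥ (Acl θbar *ᵥ z) ≤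
      rho H P (Acl θbar0) + (η0 - η) * LB H P A B K := by
    intro z hz i'
    have hAB : ∀ j, (A j + B j * K) *ᵥ z = A j *ᵥ z + B j *ᵥ (K *ᵥ z) := by
      intro j
      rw [Matrix.add_mulVec, ← Matrix.mulVec_mulVec]
    set cc : Fin p → ℝ := fun j => H i' ⬝ᵥ ((A j + B j * K) *ᵥ z) with hcc
    have hsplit : H i' ⬝ᵥ (Acl θbar *ᵥ z) =
        H i' ⬝ᵥ (Acl θbar0 *ᵥ z) + ∑ j, (θbar j - θbar0 j) * cc j := by
      rw [hM, Matrix.add_mulVec, dotProduct_add, sum_smul_mulVec, dot_sum_smul]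
    set e : Fin p → ℝ := fun j => if 0 ≤ cc j then 1 / 2 else -(1 / 2) with he
    have heV' : e ∈ vertexSet p := by
      intro j
      by_cases h : 0 ≤ cc j
      · left; simp [he, h]
      · right; simp [he, h]
    have hcol : Dmat A B z (K *ᵥ z) *ᵥ e = ∑ j, e j • ((A j + B j * K) *ᵥ z) := by
      ext k
      simp only [Finset.sum_apply, Pi.smul_apply, smul_eq_mul, hAB, mulVec, dotProduct,
        Dmat, Matrix.of_apply, Pi.add_apply]
      exact Finset.sum_congr rfl fun j _ => by ring
    have hDe : H i' ⬝ᵥ (Dmat A B z (K *ᵥ z) *ᵥ e) = ∑ j, e j * cc j := by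
      rw [hcol, dot_sum_smul]
    have hejcc : ∀ j, e j * cc j = |cc j| / 2 := by
      intro j
      by_cases h : 0 ≤ cc j
      · simp only [he, if_pos h, abs_of_nonneg h]; ring
      · simp only [he, if_neg h, abs_of_neg (lt_of_not_ge h)]; ring
    have h4 : H i' ⬝ᵥ (Acl θbar0 *ᵥ z) ≤ rho H P (Acl θbar0) :=
      le_csSup hbdd0 ⟨i', z, hz, rfl⟩
    have hsum : ∑ j, (θbar j - θbar0 j) * cc j ≤ (η0 - η) * LB H P A B K := by
      have h1 : ∑ j, (θbar j - θbar0 j) * cc j ≤ ∑ j, (η0 - η) / 2 * |cc j| :=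
        Finset.sum_le_sum fun j _ =>
          calc (θbar j - θbar0 j) * cc j ≤ |(θbar j - θbar0 j) * cc j| := le_abs_self _
            _ = |θbar j - θbar0 j| * |cc j| := abs_mul _ _
            _ ≤ (η0 - η) / 2 * |cc j| := mul_le_mul_of_nonneg_right (hδ j) (abs_nonneg _)
      have h2 : ∑ j, (η0 - η) / 2 * |cc j| =
          (η0 - η) * (H i' ⬝ᵥ (Dmat A B z (K *ᵥ z) *ᵥ e)) := by
        rw [hDe, Finset.mul_sum]
        exact Finset.sum_congr rfl fun j _ => by rw [hejcc j]; ring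
      have h3 : H i' ⬝ᵥ (Dmat A B z (K *ᵥ z) *ᵥ e) ≤ LB H P A B K :=
        le_csSup hbddL ⟨i', e, heV', z, hz, rfl⟩
      calc ∑ j, (θbar j - θbar0 j) * cc j ≤ ∑ j, (η0 - η) / 2 * |cc j| := h1
        _ = (η0 - η) * (H i' ⬝ᵥ (Dmat A B z (K *ᵥ z) *ᵥ e)) := h2
        _ ≤ (η0 - η) * LB H P A B K := mul_le_mul_of_nonneg_left h3 hη0η
    rw [hsplit]
    linarith
  have hCnn : 0 ≤ rho H P (Acl θbar0) + (η0 - η) * LB H P A B K := by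
    have := mul_nonneg hη0η hLnn
    linarith
  -- bounds on x from membership in X_f
  have hxa : ∀ j, H j ⬝ᵥ x ≤ cmax⁻¹ - s := by
    intro j
    have h1 := hxs j
    have h2 : cmax * (s + H j ⬝ᵥ x) ≤ cmax * cmax⁻¹ := by
      rwa [mul_inv_cancel₀ (ne_of_gt hcmax_pos)]
    have h3 := (mul_le_mul_iff_right₀ hcmax_pos).mp h2
    linarith
  have ha0 : 0 ≤ cmax⁻¹ - s := by
    obtain ⟨j, hj⟩ := exists_nonneg_dot H P hP hPc ⟨i⟩ x
    have := hxa j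
    linarith
  -- key scaled bounds
  have hG : H i ⬝ᵥ (Acl θbar *ᵥ x) ≤
      (cmax⁻¹ - s) * (rho H P (Acl θbar0) + (η0 - η) * LB H P A B K) := by
    refine scale_bound H P hP (fun z => H i ⬝ᵥ (Acl θbar *ᵥ z)) ?_ _
      (fun z hz => hElem z hz i) hCnn x _ ha0 hxa
    intro t z
    show H i ⬝ᵥ (Acl θbar *ᵥ (t • z)) = t * (H i ⬝ᵥ (Acl θbar *ᵥ z))
    rw [Matrix.mulVec_smul, dotProduct_smul, smul_eq_mul]
  have hρ1 : rho H P (Acl θbar) ≤ rho H P (Acl θbar0) + (η0 - η) * LB H P A B K := by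
    refine Real.sSup_le ?_ hCnn
    rintro y ⟨i', z, hz, rfl⟩
    exact hElem z hz i'
  have hw : wfun H A B η x (K *ᵥ x) ≤ η * ((cmax⁻¹ - s) * LB H P A B K) := by
    rw [wfun]
    refine mul_le_mul_of_nonneg_left ?_ hη
    refine Real.sSup_le ?_ (mul_nonneg ha0 hLnn)
    rintro y ⟨i', e, he', rfl⟩
    refine scale_bound H P hP (fun z => H i' ⬝ᵥ (Dmat A B z (K *ᵥ z) *ᵥ e)) ?_ _
      (fun z hz => le_csSup hbddL ⟨i', e, he', z, hz, rfl⟩) hLnn x _ ha0 hxa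
    intro t z
    have hDt : Dmat A B (t • z) (K *ᵥ (t • z)) = t • Dmat A B z (K *ᵥ z) := by
      ext k j
      simp [Dmat, Matrix.mulVec_smul, mul_add]
    show H i' ⬝ᵥ (Dmat A B (t • z) (K *ᵥ (t • z)) *ᵥ e) =
      t * (H i' ⬝ᵥ (Dmat A B z (K *ᵥ z) *ᵥ e))
    rw [hDt, Matrix.smul_mulVec, dotProduct_smul, smul_eq_mul]
  have hxp : H i ⬝ᵥ xplus ≤ H i ⬝ᵥ (Acl θbar *ᵥ x) + stilde := by
    have h1 := hxplus i
    rw [dotProduct_sub] at h1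
    linarith
  -- final arithmetic
  have hρs : (rho H P (Acl θbar) + η * LB H P A B K) * s ≤
      (rho H P (Acl θbar0) + (η0 - η) * LB H P A B K + η * LB H P A B K) * s :=
    mul_le_mul_of_nonneg_right (by linarith) hs
  have h5 : splus + H i ⬝ᵥ xplus ≤
      (rho H P (Acl θbar0) + (η0 - η) * LB H P A B K + η * LB H P A B K) * (s + (cmax⁻¹ - s)) +
        dbarDef H Dset := by
    nlinarith [hρs, hw, hG, hsplus, hxp]
  have h6 : cmax * (splus + H i ⬝ᵥ xplus) ≤
      cmax * ((rho H P (Acl θbar0) + (η0 - η) * LB H P A B K + η * LB H P A B K) * cmax⁻¹ +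
        dbarDef H Dset) := by
    have h7 : s + (cmax⁻¹ - s) = cmax⁻¹ := by ring
    rw [← h7]
    exact mul_le_mul_of_nonneg_left h5 hcmax_pos.le
  calc cmax * (splus + H i ⬝ᵥ xplus) ≤
      cmax * ((rho H P (Acl θbar0) + (η0 - η) * LB H P A B K + η * LB H P A B K) * cmax⁻¹ +
        dbarDef H Dset) := h6
    _ = rho H P (Acl θbar0) + η0 * LB H P A B K + cmax * dbarDef H Dset := by
        field_simp
        ring
    _ ≤ 1 := hterm
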